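/- Let G be a finite undirected graph with Laplacian L, and let f1,...,fk be nonzero real-valued functions on the vertices such that for all i ≠ j, the support of fi is disjoint from the closed neighborhood of the support of fj. Then the k-th smallest eigenvalue of L is at most the maximum over i of ⟨fi, L fi⟩ / ⟨fi, fi⟩. -/

import Mathlib

open SimpleGraph Finset Matrix

/-- The `k`-th smallest eigenvalue (0-indexed) of a Hermitian matrix, obtained by
sorting the eigenvalues (with multiplicity) in nondecreasing order. -/
noncomputable def kthSmallestEigenvalue {n : ℕ} {A : Matrix (Fin n) (Fin n) ℝ}
    (hA : A.IsHermitian) (k : Fin n) : ℝ :=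
  (hA.eigenvalues ∘ (Tuple.sort hA.eigenvalues)) k

private lemma aux_sum_smul_dotProduct {n k : ℕ} (c : Fin k → ℝ) (f : Fin k → Fin n → ℝ)
    (w : Fin n → ℝ) : (∑ i, c i • f i) ⬝ᵥ w = ∑ i, c i * (f i ⬝ᵥ w) := by
  simp only [dotProduct, Finset.sum_apply, Pi.smul_apply, smul_eq_mul, Finset.sum_mul,
    Finset.mul_sum]
  rw [Finset.sum_comm]
  simp [mul_assoc]

private lemma aux_dotProduct_sum_smul {n k : ℕ} (c : Fin k → ℝ) (f : Fin k → Fin n → ℝ)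
    (w : Fin n → ℝ) : w ⬝ᵥ (∑ i, c i • f i) = ∑ i, c i * (w ⬝ᵥ f i) := by
  simp only [dotProduct, Finset.sum_apply, Pi.smul_apply, smul_eq_mul, Finset.mul_sum]
  rw [Finset.sum_comm]
  congr 1; funext i; congr 1; funext x; ring

private lemma aux_mulVec_sum_smul {n k : ℕ} (A : Matrix (Fin n) (Fin n) ℝ)
    (c : Fin k → ℝ) (f : Fin k → Fin n → ℝ) :
    A *ᵥ (∑ i, c i • f i) = ∑ i, c i • (A *ᵥ f i) := by
  have : A *ᵥ (∑ i, c i • f i) = A.mulVecLin (∑ i, c i • f i) := rfl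
  rw [this, map_sum]
  simp [Matrix.mulVecLin_apply]

private lemma aux_dotProduct_self_pos {n : ℕ} {v : Fin n → ℝ} (hv : v ≠ 0) :
    0 < v ⬝ᵥ v := by
  rcases lt_or_eq_of_le (Finset.sum_nonneg fun x _ => mul_self_nonneg (v x) :
      (0:ℝ) ≤ v ⬝ᵥ v) with h | h
  · exact h
  · exact absurd (dotProduct_self_eq_zero.mp h.symm) hv

/-- If `f 1, …, f k` are nonzero functions on the vertices of a finite graph `G` such that
for `i ≠ j` the support of `f i` is disjoint from the closed neighborhood of the support
of `f j`, then the `k`-th smallest Laplacian eigenvalue is at most the maximum Rayleigh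
quotient `⟨f i, L (f i)⟩ / ⟨f i, f i⟩`. -/
theorem kth_eigenvalue_le_max_rayleigh (n k : ℕ) (hk : 0 < k) (hkn : k ≤ n)
    (G : SimpleGraph (Fin n)) [DecidableRel G.Adj]
    (f : Fin k → (Fin n → ℝ))
    (hf : ∀ i, f i ≠ 0)
    (hsupp : ∀ i j, i ≠ j → ∀ x, f i x ≠ 0 →
      f j x = 0 ∧ ∀ y, G.Adj x y → f j y = 0) :
    kthSmallestEigenvalue (Matrix.PosSemidef.isHermitian
        (SimpleGraph.posSemidef_lapMatrix ℝ G)) ⟨k - 1, by omega⟩ ≤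
      Finset.univ.sup' (Finset.univ_nonempty_iff.mpr ⟨⟨0, hk⟩⟩)
        (fun i : Fin k =>
          (f i ⬝ᵥ (G.lapMatrix ℝ) *ᵥ f i) / (f i ⬝ᵥ f i)) := by
  classical
  set A : Matrix (Fin n) (Fin n) ℝ := G.lapMatrix ℝ with hAdef
  set hA : A.IsHermitian :=
    Matrix.PosSemidef.isHermitian (SimpleGraph.posSemidef_lapMatrix ℝ G) with hAh
  set U : Matrix (Fin n) (Fin n) ℝ := (hA.eigenvectorUnitary : Matrix (Fin n) (Fin n) ℝ)
    with hUdef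
  set μ : Fin n → ℝ := hA.eigenvalues with hμdef
  set σ : Equiv.Perm (Fin n) := Tuple.sort μ with hσdef
  set M : ℝ := Finset.univ.sup' (Finset.univ_nonempty_iff.mpr ⟨⟨0, hk⟩⟩)
        (fun i : Fin k => (f i ⬝ᵥ A *ᵥ f i) / (f i ⬝ᵥ f i)) with hMdef
  -- cross terms vanish
  have hLcross : ∀ i j : Fin k, i ≠ j → f i ⬝ᵥ (A *ᵥ f j) = 0 := by
    intro i j hij
    apply Finset.sum_eq_zero
    intro x _
    by_cases hx : f i x = 0
    · rw [hx, zero_mul]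
    · obtain ⟨h1, h2⟩ := hsupp i j hij x hx
      rw [hAdef, SimpleGraph.lapMatrix_mulVec_apply, h1,
        Finset.sum_eq_zero (fun u hu => h2 u ((SimpleGraph.mem_neighborFinset G x u).mp hu))]
      ring
  have hDcross : ∀ i j : Fin k, i ≠ j → f i ⬝ᵥ f j = 0 := by
    intro i j hij
    apply Finset.sum_eq_zero
    intro x _
    by_cases hx : f i x = 0
    · rw [hx, zero_mul]
    · rw [(hsupp i j hij x hx).1, mul_zero]
  -- positivity of norms
  have hNpos : ∀ i : Fin k, 0 < f i ⬝ᵥ f i := fun i => aux_dotProduct_self_pos (hf i)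
  -- the Rayleigh bound for each i
  have hQle : ∀ i : Fin k, f i ⬝ᵥ A *ᵥ f i ≤ M * (f i ⬝ᵥ f i) := by
    intro i
    have hle : (f i ⬝ᵥ A *ᵥ f i) / (f i ⬝ᵥ f i) ≤ M := by
      rw [hMdef]
      exact Finset.le_sup' (fun i : Fin k => (f i ⬝ᵥ A *ᵥ f i) / (f i ⬝ᵥ f i))
        (Finset.mem_univ i)
    calc f i ⬝ᵥ A *ᵥ f i = ((f i ⬝ᵥ A *ᵥ f i) / (f i ⬝ᵥ f i)) * (f i ⬝ᵥ f i) :=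
          (div_mul_cancel₀ _ (hNpos i).ne').symm
      _ ≤ M * (f i ⬝ᵥ f i) := mul_le_mul_of_nonneg_right hle (hNpos i).le
  -- the linear map picking out the first k-1 sorted coordinates
  have hmn : ∀ j : Fin (k - 1), (j : ℕ) < n := fun j => by omega
  let idx : Fin (k - 1) → Fin n := fun j => σ ⟨j, hmn j⟩
  let T : (Fin k → ℝ) →ₗ[ℝ] (Fin (k - 1) → ℝ) :=
  { toFun := fun c j => (star U *ᵥ (∑ i, c i • f i)) (idx j)
    map_add' := by
      intro a b
      funext j
      simp [add_smul, Finset.sum_add_distrib, Matrix.mulVec_add]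
    map_smul' := by
      intro r a
      have h2 : (∑ x : Fin k, (r • a) x • f x) = r • (∑ i : Fin k, a i • f i) := by
        rw [Finset.smul_sum]
        exact Finset.sum_congr rfl
          (fun x _ => by rw [Pi.smul_apply, smul_smul, smul_eq_mul])
      funext j
      show (star U *ᵥ ∑ x : Fin k, (r • a) x • f x) (idx j) =
        r * (star U *ᵥ ∑ i : Fin k, a i • f i) (idx j)
      rw [h2, Matrix.mulVec_smul]
      simp }
  have hTnotinj : ¬ Function.Injective T := by
    intro h
    have hle := LinearMap.finrank_le_finrank_of_injective h
    rw [Module.finrank_fintype_fun_eq_card, Module.finrank_fintype_fun_eq_card] at hle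
    simp only [Fintype.card_fin] at hle
    omega
  rw [Function.not_injective_iff] at hTnotinj
  obtain ⟨a, b, hab, hne⟩ := hTnotinj
  set c : Fin k → ℝ := a - b with hcdef
  have hc0 : c ≠ 0 := sub_ne_zero.mpr hne
  have hTc : T c = 0 := by rw [hcdef, map_sub, hab, sub_self]
  set v : Fin n → ℝ := ∑ i, c i • f i with hvdef
  -- v ≠ 0
  have hv0 : v ≠ 0 := by
    obtain ⟨i, hi⟩ := Function.ne_iff.mp hc0
    obtain ⟨x, hx⟩ := Function.ne_iff.mp (hf i)
    have hvx : v x = c i * f i x := by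
      rw [hvdef]
      rw [Finset.sum_apply]
      rw [Finset.sum_eq_single i]
      · simp
      · intro j _ hji
        have := (hsupp i j (Ne.symm hji) x hx).1
        simp [this]
      · simp
    intro h
    rw [h] at hvx
    exact (mul_ne_zero hi hx) hvx.symm
  set g : Fin n → ℝ := star U *ᵥ v with hgdef
  have hUg : U *ᵥ g = v := by
    rw [hgdef, Matrix.mulVec_mulVec,
      (Matrix.mem_unitaryGroup_iff).mp hA.eigenvectorUnitary.2, Matrix.one_mulVec]
  -- dot identity: v ⬝ᵥ (U *ᵥ w) = g ⬝ᵥ w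
  have hstarU : star U = Uᵀ := by
    rw [Matrix.star_eq_conjTranspose]
    ext i j
    simp [Matrix.conjTranspose_apply]
  have hdot : ∀ w : Fin n → ℝ, v ⬝ᵥ (U *ᵥ w) = g ⬝ᵥ w := by
    intro w
    rw [Matrix.dotProduct_mulVec, hgdef, hstarU, Matrix.mulVec_transpose]
  have hvv : v ⬝ᵥ v = ∑ i, g i * g i := by
    have h1 : v ⬝ᵥ v = v ⬝ᵥ (U *ᵥ g) := by rw [hUg]
    rw [h1, hdot g]
    rfl
  have hvAv : v ⬝ᵥ A *ᵥ v = ∑ i, μ i * (g i * g i) := by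
    have hspec := hA.spectral_theorem
    rw [Unitary.conjStarAlgAut_apply] at hspec
    conv_lhs => rw [hspec]
    rw [← Matrix.mulVec_mulVec, ← Matrix.mulVec_mulVec, ← hgdef, hdot]
    simp only [dotProduct, Matrix.mulVec_diagonal, Function.comp_apply,
      RCLike.ofReal_real_eq_id, id_eq]
    congr 1; funext i; ring
  -- first k-1 sorted coordinates of g vanish
  have hgz : ∀ j : Fin n, (j : ℕ) < k - 1 → g (σ j) = 0 := by
    intro j hj
    have := congrFun hTc ⟨j, hj⟩
    simpa [T, idx, ← hvdef, ← hgdef, Fin.eta] using this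
  set m : Fin n := ⟨k - 1, by omega⟩ with hmdef
  have hmono : Monotone (μ ∘ σ) := Tuple.monotone_sort μ
  -- lower bound
  have hlow : μ (σ m) * (v ⬝ᵥ v) ≤ v ⬝ᵥ A *ᵥ v := by
    rw [hvAv, hvv, Finset.mul_sum]
    rw [← Equiv.sum_comp σ (fun i => μ i * (g i * g i)),
        ← Equiv.sum_comp σ (fun i => μ (σ m) * (g i * g i))]
    apply Finset.sum_le_sum
    intro j _
    by_cases hj : (j : ℕ) < k - 1
    · rw [hgz j hj]; simp
    · have hmj : m ≤ j := by
        rw [Fin.le_def]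
        show k - 1 ≤ (j : ℕ)
        omega
      exact mul_le_mul_of_nonneg_right (hmono hmj) (mul_self_nonneg _)
  -- upper bound
  have hvAv_eq : v ⬝ᵥ A *ᵥ v = ∑ i, c i * (c i * (f i ⬝ᵥ A *ᵥ f i)) := by
    rw [hvdef, aux_sum_smul_dotProduct]
    congr 1; funext i
    rw [aux_mulVec_sum_smul, aux_dotProduct_sum_smul]
    congr 1
    exact Finset.sum_eq_single i
      (fun j _ hji => by rw [hLcross i j (Ne.symm hji), mul_zero]) (by simp)
  have hvv_eq : v ⬝ᵥ v = ∑ i, c i * (c i * (f i ⬝ᵥ f i)) := by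
    rw [hvdef, aux_sum_smul_dotProduct]
    congr 1; funext i
    rw [aux_dotProduct_sum_smul]
    congr 1
    exact Finset.sum_eq_single i
      (fun j _ hji => by rw [hDcross i j (Ne.symm hji), mul_zero]) (by simp)
  have hhigh : v ⬝ᵥ A *ᵥ v ≤ M * (v ⬝ᵥ v) := by
    rw [hvAv_eq, hvv_eq, Finset.mul_sum]
    apply Finset.sum_le_sum
    intro i _
    have h1 : c i * (c i * (f i ⬝ᵥ A *ᵥ f i)) = (c i * c i) * (f i ⬝ᵥ A *ᵥ f i) := by ring
    have h2 : M * (c i * (c i * (f i ⬝ᵥ f i))) = (c i * c i) * (M * (f i ⬝ᵥ f i)) := by ring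
    rw [h1, h2]
    exact mul_le_mul_of_nonneg_left (hQle i) (mul_self_nonneg _)
  have hvvpos : 0 < v ⬝ᵥ v := aux_dotProduct_self_pos hv0
  have hfinal : μ (σ m) ≤ M := by
    have := hlow.trans hhigh
    exact le_of_mul_le_mul_right this hvvpos
  exact hfinal
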